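/- For every integer l ≥ 2, (1 − p)·a_{l−1} ≤ √(a_{2l}). Moreover, for nonnegative integers n < m ≤ N, with l := ⌈(n+1)/(m−n)⌉, d₁ := (m+1) − l(m−n), and d₂ := l(m−n) − (n+1), one has P(m ∉ A + A and n ∉ A + A) ≤ a_{2l+2}^{d₁/2} · a_{2l}^{d₂/2} and P(m ∉ A + A and n ∉ A + A) ≤ λ₁^{1 + (m+n)/2}. -/

import Mathlib

open MeasureTheory Filter

/-- The Bernoulli(p) measure on `Bool`: `true` has probability `p`. -/
noncomputable def bern (p : ℝ) : Measure Bool :=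
  ENNReal.ofReal p • Measure.dirac true + ENNReal.ofReal (1 - p) • Measure.dirac false

/-- The law of a random subset of `{0, …, N}` where each element is included
independently with probability `p`, encoded by indicator functions. -/
noncomputable def prodBern (p : ℝ) (N : ℕ) : Measure (Fin (N + 1) → Bool) :=
  Measure.pi fun _ => bern p

/-- `n` belongs to the sumset `A + A`, where `A ⊆ {0,…,N}` is encoded by `ω`. -/
def inSumset {N : ℕ} (ω : Fin (N + 1) → Bool) (n : ℕ) : Prop :=
  ∃ a b : Fin (N + 1), ω a = true ∧ ω b = true ∧ (a : ℕ) + (b : ℕ) = n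

/-- `Y`: the number of integers in `{0,…,N}` missing from `A + A`. -/
noncomputable def Ycount (N : ℕ) (ω : Fin (N + 1) → Bool) : ℕ :=
  {n : ℕ | n ≤ N ∧ ¬ inSumset ω n}.ncard

/-- `Z`: the number of integers in `{N+1,…,2N}` missing from `A + A`. -/
noncomputable def Zcount (N : ℕ) (ω : Fin (N + 1) → Bool) : ℕ :=
  {n : ℕ | N + 1 ≤ n ∧ n ≤ 2 * N ∧ ¬ inSumset ω n}.ncard

/-- `W`: the number of integers in `{0,…,2N}` missing from `A + A`. -/
noncomputable def Wcount (N : ℕ) (ω : Fin (N + 1) → Bool) : ℕ :=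
  {n : ℕ | n ≤ 2 * N ∧ ¬ inSumset ω n}.ncard

/-- `Ỹ`: the number of integers in `{0,…,⌊N/2⌋}` missing from `A + A`. -/
noncomputable def Ytilde (N : ℕ) (ω : Fin (N + 1) → Bool) : ℕ :=
  {n : ℕ | n ≤ N / 2 ∧ ¬ inSumset ω n}.ncard

/-- `Z̃`: the number of integers in `{⌊3N/2⌋+1,…,2N}` missing from `A + A`. -/
noncomputable def Ztilde (N : ℕ) (ω : Fin (N + 1) → Bool) : ℕ :=
  {n : ℕ | 3 * N / 2 + 1 ≤ n ∧ n ≤ 2 * N ∧ ¬ inSumset ω n}.ncard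

/-- A string of `k` bits has no two consecutive ones. -/
def noTwoOnes {k : ℕ} (x : Fin k → Bool) : Prop :=
  ∀ i : ℕ, ∀ hi : i + 1 < k, ¬(x ⟨i, Nat.lt_of_succ_lt hi⟩ = true ∧ x ⟨i + 1, hi⟩ = true)

/-- `a_k`: the probability that `k` i.i.d. Bernoulli(p) bits contain no two
consecutive 1's (with `a_0 = 1`). -/
noncomputable def aseq (p : ℝ) (k : ℕ) : ℝ :=
  ((Measure.pi fun _ : Fin k => bern p) {x | noTwoOnes x}).toReal

namespace Stmt13
open MeasureTheory

/-- weight of a bit -/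
def w (p : ℝ) : Bool → ℝ := fun b => bif b then p else 1 - p

lemma w_nonneg {p : ℝ} (hp0 : 0 ≤ p) (hp1 : p ≤ 1) (b : Bool) : 0 ≤ w p b := by
  cases b <;> simp [w] <;> linarith

lemma measurableSet_all {ι : Type*} [Finite ι] (S : Set (ι → Bool)) : MeasurableSet S :=
  (Set.to_countable S).measurableSet

instance bern_finite (p : ℝ) : IsFiniteMeasure (bern p) := by
  constructor
  rw [bern]
  simp only [Measure.coe_add, Measure.coe_smul, Pi.add_apply, Pi.smul_apply, smul_eq_mul]
  refine ENNReal.add_lt_top.2 ⟨?_, ?_⟩ <;>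
    exact ENNReal.mul_lt_top ENNReal.ofReal_lt_top (by simp [Measure.dirac_apply])

lemma bern_singleton {p : ℝ} (hp0 : 0 ≤ p) (hp1 : p ≤ 1) (b : Bool) :
    bern p {b} = ENNReal.ofReal (w p b) := by
  cases b <;>
    simp [bern, w, Measure.dirac_apply, Set.indicator]

lemma bern_prob {p : ℝ} (hp0 : 0 ≤ p) (hp1 : p ≤ 1) : IsProbabilityMeasure (bern p) := by
  constructor
  have : (Set.univ : Set Bool) = {true} ∪ {false} := by
    ext b; cases b <;> simp
  rw [this, measure_union (by simp) (measurableSet_singleton _),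
    bern_singleton hp0 hp1, bern_singleton hp0 hp1]
  rw [← ENNReal.ofReal_add (w_nonneg hp0 hp1 _) (w_nonneg hp0 hp1 _)]
  simp [w]

/-- product of weights -/
def W (p : ℝ) {M : ℕ} (x : Fin M → Bool) : ℝ := ∏ i, w p (x i)

lemma W_nonneg {p : ℝ} (hp0 : 0 ≤ p) (hp1 : p ≤ 1) {M : ℕ} (x : Fin M → Bool) : 0 ≤ W p x :=
  Finset.prod_nonneg fun i _ => w_nonneg hp0 hp1 _

lemma pi_singleton {p : ℝ} (hp0 : 0 ≤ p) (hp1 : p ≤ 1) {M : ℕ} (x : Fin M → Bool) :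
    (Measure.pi fun _ : Fin M => bern p) {x} = ENNReal.ofReal (W p x) := by
  have h1 : ({x} : Set (Fin M → Bool)) = Set.univ.pi (fun i => {x i}) := by
    ext y; simp [funext_iff, Set.mem_pi]
  rw [h1, Measure.pi_pi, W]
  calc (∏ i : Fin M, bern p {x i}) = ∏ i : Fin M, ENNReal.ofReal (w p (x i)) :=
        Finset.prod_congr rfl fun i _ => bern_singleton hp0 hp1 _
    _ = ENNReal.ofReal (∏ i : Fin M, w p (x i)) :=
        (ENNReal.ofReal_prod_of_nonneg (fun i _ => w_nonneg hp0 hp1 _)).symm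

open Classical in
/-- sum of weights over a finite set of strings -/
noncomputable def PW (p : ℝ) {M : ℕ} (S : Set (Fin M → Bool)) : ℝ :=
  ∑ x ∈ Finset.univ.filter (· ∈ S), W p x

lemma PW_nonneg {p : ℝ} (hp0 : 0 ≤ p) (hp1 : p ≤ 1) {M : ℕ} (S : Set (Fin M → Bool)) :
    0 ≤ PW p S :=
  Finset.sum_nonneg fun x _ => W_nonneg hp0 hp1 x

lemma pi_apply {p : ℝ} (hp0 : 0 ≤ p) (hp1 : p ≤ 1) {M : ℕ} (S : Set (Fin M → Bool)) :
    (Measure.pi fun _ : Fin M => bern p) S = ENNReal.ofReal (PW p S) := by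
  classical
  have h1 : S = ⋃ x ∈ Finset.univ.filter (· ∈ S), ({x} : Set (Fin M → Bool)) := by
    ext y; simp
  have h2 : (Measure.pi fun _ : Fin M => bern p) (⋃ x ∈ Finset.univ.filter (· ∈ S), ({x} : Set (Fin M → Bool))) = ∑ x ∈ Finset.univ.filter (· ∈ S), (Measure.pi fun _ : Fin M => bern p) {x} := by
    apply measure_biUnion_finset
    · intro a _ b _ hab
      simp [Function.onFun, Set.disjoint_singleton, hab]
    · exact fun b _ => measurableSet_singleton _
  calc (Measure.pi fun _ : Fin M => bern p) S
      = ∑ x ∈ Finset.univ.filter (· ∈ S), (Measure.pi fun _ : Fin M => bern p) {x} := by rw [← h2, ← h1]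
    _ = ENNReal.ofReal (PW p S) := by
        rw [PW, ENNReal.ofReal_sum_of_nonneg (fun x _ => W_nonneg hp0 hp1 x)]
        exact Finset.sum_congr rfl fun x _ => pi_singleton hp0 hp1 x

lemma pi_apply_toReal {p : ℝ} (hp0 : 0 ≤ p) (hp1 : p ≤ 1) {M : ℕ} (S : Set (Fin M → Bool)) :
    ((Measure.pi fun _ : Fin M => bern p) S).toReal = PW p S := by
  rw [pi_apply hp0 hp1, ENNReal.toReal_ofReal (PW_nonneg hp0 hp1 S)]

end Stmt13
namespace Stmt13
open MeasureTheory

variable {p : ℝ} {k : ℕ}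

lemma W_snoc (x : Fin k → Bool) (b : Bool) : W p (Fin.snoc x b) = W p x * w p b := by
  rw [W, Fin.prod_univ_castSucc]
  simp [Fin.snoc_castSucc, Fin.snoc_last, W]

/-- equivalence splitting off the last bit -/
def snocE (k : ℕ) : ((Fin k → Bool) × Bool) ≃ (Fin (k + 1) → Bool) where
  toFun z := Fin.snoc z.1 z.2
  invFun y := (Fin.init y, y (Fin.last k))
  left_inv := by
    rintro ⟨x, b⟩
    simp [Fin.init_snoc, Fin.snoc_last]
  right_inv := fun y => Fin.snoc_init_self y

lemma PW_succ (Q : Set (Fin (k + 1) → Bool)) :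
    PW p Q = PW p {x | Fin.snoc x true ∈ Q} * p + PW p {x | Fin.snoc x false ∈ Q} * (1 - p) := by
  classical
  have h := Fintype.sum_equiv (snocE k)
      (fun z : (Fin k → Bool) × Bool => if Fin.snoc z.1 z.2 ∈ Q then W p (Fin.snoc z.1 z.2) else 0)
      (fun y => if y ∈ Q then W p y else 0) (fun z => by rfl)
  rw [PW, Finset.sum_filter, ← h, Fintype.sum_prod_type]
  simp only [Fintype.sum_bool, W_snoc]
  rw [Finset.sum_add_distrib]
  congr 1
  · rw [PW, Finset.sum_filter, Finset.sum_mul]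
    apply Finset.sum_congr rfl; intro x _
    by_cases hx : Fin.snoc x true ∈ Q <;> simp [hx, w]
  · rw [PW, Finset.sum_filter, Finset.sum_mul]
    apply Finset.sum_congr rfl; intro x _
    by_cases hx : Fin.snoc x false ∈ Q <;> simp [hx, w]

/-- the last bit of a string (false for the empty string) -/
def lastBit {k : ℕ} (x : Fin k → Bool) : Bool :=
  if h : 0 < k then x ⟨k - 1, by omega⟩ else false

lemma lastBit_snoc (x : Fin k → Bool) (b : Bool) :
    lastBit (Fin.snoc x b : Fin (k + 1) → Bool) = b := by
  rw [lastBit]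
  have h0 : 0 < k + 1 := by omega
  rw [dif_pos h0]
  have : (⟨k + 1 - 1, by omega⟩ : Fin (k + 1)) = Fin.last k := by
    apply Fin.ext; simp
  rw [this, Fin.snoc_last]

lemma snoc_eval_lt (x : Fin k → Bool) (b : Bool) (i : ℕ) (h : i < k) (h' : i < k + 1) :
    (Fin.snoc x b : Fin (k + 1) → Bool) ⟨i, h'⟩ = x ⟨i, h⟩ := by
  have : (⟨i, h'⟩ : Fin (k + 1)) = Fin.castSucc ⟨i, h⟩ := rfl
  rw [this, Fin.snoc_castSucc]

lemma snoc_eval_last (x : Fin k → Bool) (b : Bool) (h' : k < k + 1) :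
    (Fin.snoc x b : Fin (k + 1) → Bool) ⟨k, h'⟩ = b := by
  have : (⟨k, h'⟩ : Fin (k + 1)) = Fin.last k := rfl
  rw [this, Fin.snoc_last]

lemma noTwoOnes_snoc (x : Fin k → Bool) (b : Bool) :
    noTwoOnes (Fin.snoc x b : Fin (k + 1) → Bool) ↔
      noTwoOnes x ∧ ¬(lastBit x = true ∧ b = true) := by
  constructor
  · intro H
    refine ⟨fun i hi h2 => ?_, fun hlb => ?_⟩
    · apply H i (by omega)
      rwa [snoc_eval_lt x b i (by omega) (by omega),
        snoc_eval_lt x b (i+1) (by omega) (by omega)]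
    · obtain ⟨hl, hb⟩ := hlb
      rw [lastBit] at hl
      by_cases h0 : 0 < k
      · rw [dif_pos h0] at hl
        apply H (k - 1) (by omega)
        constructor
        · rwa [snoc_eval_lt x b (k-1) (by omega) (by omega)]
        · have hk : k - 1 + 1 = k := by omega
          have : (⟨k - 1 + 1, by omega⟩ : Fin (k+1)) = ⟨k, by omega⟩ := by
            apply Fin.ext; simp [hk]
          rw [this, snoc_eval_last]
          exact hb
      · rw [dif_neg h0] at hl; exact absurd hl (by simp)
  · rintro ⟨H, hnb⟩ i hi ⟨h1, h2⟩
    by_cases hik : i + 1 < k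
    · rw [snoc_eval_lt x b i (by omega) (by omega)] at h1
      rw [snoc_eval_lt x b (i+1) (by omega) (by omega)] at h2
      exact H i hik ⟨h1, h2⟩
    · have hik' : i + 1 = k := by omega
      apply hnb
      constructor
      · rw [lastBit, dif_pos (by omega : 0 < k)]
        rw [snoc_eval_lt x b i (by omega) (by omega)] at h1
        have : (⟨k - 1, by omega⟩ : Fin k) = ⟨i, by omega⟩ := by
          apply Fin.ext; simp; omega
        rw [this]; exact h1
      · have : (⟨i + 1, hi⟩ : Fin (k+1)) = ⟨k, by omega⟩ := by
          apply Fin.ext; simp [hik']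
        rw [this, snoc_eval_last] at h2
        exact h2

/-- `A p k` : total weight of strings with no two consecutive ones. -/
noncomputable def Aseq (p : ℝ) (k : ℕ) : ℝ := PW p {x : Fin k → Bool | noTwoOnes x}

/-- `B p k` : total weight of strings with no two consecutive ones ending in 0. -/
noncomputable def Bseq (p : ℝ) (k : ℕ) : ℝ :=
  PW p {x : Fin k → Bool | noTwoOnes x ∧ lastBit x = false}

lemma noTwoOnes_zero (x : Fin 0 → Bool) : noTwoOnes x := fun i hi => by omega

lemma Aseq_zero : Aseq p 0 = 1 := by
  classical
  rw [Aseq, PW, Finset.sum_filter]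
  simp [noTwoOnes_zero, W]

lemma Bseq_zero : Bseq p 0 = 1 := by
  classical
  rw [Bseq, PW, Finset.sum_filter]
  simp [noTwoOnes_zero, lastBit, W]

lemma Bseq_succ : Bseq p (k + 1) = (1 - p) * Aseq p k := by
  rw [Bseq, PW_succ]
  have h1 : {x : Fin k → Bool | Fin.snoc x true ∈ {y : Fin (k+1) → Bool | noTwoOnes y ∧ lastBit y = false}} = ∅ := by
    ext x; simp [lastBit_snoc]
  have h2 : {x : Fin k → Bool | Fin.snoc x false ∈ {y : Fin (k+1) → Bool | noTwoOnes y ∧ lastBit y = false}} = {x | noTwoOnes x} := by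
    ext x; simp [lastBit_snoc, noTwoOnes_snoc]
  rw [h1, h2]
  have : PW p (∅ : Set (Fin k → Bool)) = 0 := by
    rw [PW]; simp
  rw [this, Aseq]; ring

lemma Aseq_succ : Aseq p (k + 1) = (1 - p) * Aseq p k + p * Bseq p k := by
  rw [Aseq, PW_succ]
  have h1 : {x : Fin k → Bool | Fin.snoc x true ∈ {y : Fin (k+1) → Bool | noTwoOnes y}} = {x | noTwoOnes x ∧ lastBit x = false} := by
    ext x
    simp only [Set.mem_setOf_eq, noTwoOnes_snoc]
    constructor
    · rintro ⟨h, hn⟩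
      refine ⟨h, ?_⟩
      by_contra hc
      exact hn ⟨by simpa using hc, trivial⟩
    · rintro ⟨h, hl⟩
      exact ⟨h, by simp [hl]⟩
  have h2 : {x : Fin k → Bool | Fin.snoc x false ∈ {y : Fin (k+1) → Bool | noTwoOnes y}} = {x | noTwoOnes x} := by
    ext x; simp [noTwoOnes_snoc]
  rw [h1, h2, ← Aseq, ← Bseq]
  ring

lemma Aseq_nonneg (hp0 : 0 ≤ p) (hp1 : p ≤ 1) (k : ℕ) : 0 ≤ Aseq p k :=
  PW_nonneg hp0 hp1 _

lemma Bseq_nonneg (hp0 : 0 ≤ p) (hp1 : p ≤ 1) (k : ℕ) : 0 ≤ Bseq p k :=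
  PW_nonneg hp0 hp1 _

lemma Aseq_pos (hp0 : 0 ≤ p) (hp1 : p < 1) (k : ℕ) : 0 < Aseq p k := by
  induction k with
  | zero => rw [Aseq_zero]; norm_num
  | succ k ih =>
    rw [Aseq_succ]
    have h1 : 0 < (1 - p) * Aseq p k := by
      apply mul_pos (by linarith) ih
    have h2 : 0 ≤ p * Bseq p k := mul_nonneg hp0 (Bseq_nonneg hp0 hp1.le k)
    linarith

lemma Aseq_rec (k : ℕ) : Aseq p (k + 2) = (1 - p) * Aseq p (k + 1) + p * (1 - p) * Aseq p k := by
  rw [Aseq_succ, Bseq_succ]; ring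

end Stmt13
namespace Stmt13
open MeasureTheory

variable {p : ℝ}

lemma piBern_prob (hp0 : 0 ≤ p) (hp1 : p ≤ 1) {ι : Type*} [Fintype ι] :
    IsProbabilityMeasure (Measure.pi fun _ : ι => bern p) := by
  haveI := bern_prob hp0 hp1
  infer_instance

/-- `P` depends only on coordinates in `s`. -/
def DependsOn {M : ℕ} (s : Set (Fin M)) (P : Set (Fin M → Bool)) : Prop :=
  ∀ x y : Fin M → Bool, (∀ i ∈ s, x i = y i) → x ∈ P → y ∈ P

lemma DependsOn.mono {M : ℕ} {s s' : Set (Fin M)} {P : Set (Fin M → Bool)}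
    (h : DependsOn s P) (hss : s ⊆ s') : DependsOn s' P :=
  fun x y hxy hx => h x y (fun i hi => hxy i (hss hi)) hx

lemma indep2 (hp0 : 0 ≤ p) (hp1 : p ≤ 1) {M : ℕ} (s : Set (Fin M))
    (P Q : Set (Fin M → Bool)) (hP : DependsOn s P) (hQ : DependsOn sᶜ Q) :
    (Measure.pi fun _ : Fin M => bern p) (P ∩ Q) =
      (Measure.pi fun _ : Fin M => bern p) P * (Measure.pi fun _ : Fin M => bern p) Q := by
  classical
  haveI := bern_prob hp0 hp1
  set e := MeasurableEquiv.piEquivPiSubtypeProd (fun _ : Fin M => Bool) (· ∈ s) with he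
  set P' : Set ({i : Fin M // i ∈ s} → Bool) :=
    (fun (x : Fin M → Bool) (i : {i : Fin M // i ∈ s}) => x i) '' P with hP'
  set Q' : Set ({i : Fin M // ¬ i ∈ s} → Bool) :=
    (fun (x : Fin M → Bool) (i : {i : Fin M // ¬ i ∈ s}) => x i) '' Q with hQ'
  have hex : ∀ x : Fin M → Bool,
      e x = ((fun i : {i : Fin M // i ∈ s} => x i), (fun i : {i : Fin M // ¬ i ∈ s} => x i)) :=
    fun x => rfl
  have hPmem : ∀ x : Fin M → Bool, x ∈ P ↔ (fun i : {i : Fin M // i ∈ s} => x i) ∈ P' := by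
    intro x
    constructor
    · intro hx; exact ⟨x, hx, rfl⟩
    · rintro ⟨z, hz, hzx⟩
      refine hP z x (fun i hi => ?_) hz
      exact congrFun hzx ⟨i, hi⟩
  have hQmem : ∀ x : Fin M → Bool, x ∈ Q ↔ (fun i : {i : Fin M // ¬ i ∈ s} => x i) ∈ Q' := by
    intro x
    constructor
    · intro hx; exact ⟨x, hx, rfl⟩
    · rintro ⟨z, hz, hzx⟩
      refine hQ z x (fun i hi => ?_) hz
      exact congrFun hzx ⟨i, hi⟩
  have hmp := measurePreserving_piEquivPiSubtypeProd (fun _ : Fin M => bern p) (· ∈ s)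
  rw [← he] at hmp
  have hPQe : P ∩ Q = e ⁻¹' (P' ×ˢ Q') := by
    ext x
    simp only [Set.mem_inter_iff, Set.mem_preimage, hex, Set.mem_prod]
    rw [hPmem x, hQmem x]
  have hPe : P = e ⁻¹' (P' ×ˢ Set.univ) := by
    ext x
    simp only [Set.mem_preimage, hex, Set.mem_prod, Set.mem_univ, and_true]
    exact hPmem x
  have hQe : Q = e ⁻¹' (Set.univ ×ˢ Q') := by
    ext x
    simp only [Set.mem_preimage, hex, Set.mem_prod, Set.mem_univ, true_and]
    exact hQmem x
  have hmeas : ∀ (U : Set ({i : Fin M // i ∈ s} → Bool)) (V : Set ({i : Fin M // ¬ i ∈ s} → Bool)),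
      MeasurableSet (U ×ˢ V) :=
    fun U V => (measurableSet_all U).prod (measurableSet_all V)
  rw [hPQe, hPe, hQe, hmp.measure_preimage (hmeas _ _).nullMeasurableSet,
    hmp.measure_preimage (hmeas _ _).nullMeasurableSet,
    hmp.measure_preimage (hmeas _ _).nullMeasurableSet,
    Measure.prod_prod, Measure.prod_prod, Measure.prod_prod]
  haveI : IsProbabilityMeasure (Measure.pi fun _ : {i : Fin M // i ∈ s} => bern p) :=
    piBern_prob hp0 hp1
  haveI : IsProbabilityMeasure (Measure.pi fun _ : {i : Fin M // ¬ i ∈ s} => bern p) :=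
    piBern_prob hp0 hp1
  rw [measure_univ, measure_univ, one_mul, mul_one]

lemma indepn (hp0 : 0 ≤ p) (hp1 : p ≤ 1) {M : ℕ} {ι : Type*} [DecidableEq ι] (K : Finset ι)
    (t : ι → Set (Fin M)) (F : ι → Set (Fin M → Bool))
    (hd : ∀ i ∈ K, DependsOn (t i) (F i))
    (hdisj : ∀ i ∈ K, ∀ j ∈ K, i ≠ j → Disjoint (t i) (t j)) :
    (Measure.pi fun _ : Fin M => bern p) (⋂ i ∈ K, F i) =
      ∏ i ∈ K, (Measure.pi fun _ : Fin M => bern p) (F i) := by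
  classical
  haveI : IsProbabilityMeasure (Measure.pi fun _ : Fin M => bern p) := piBern_prob hp0 hp1
  revert hd hdisj
  induction K using Finset.induction with
  | empty => intro _ _; simp
  | @insert a K ha ih =>
    intro hd hdisj
    rw [Finset.set_biInter_insert, Finset.prod_insert ha]
    have hQdep : DependsOn (t a)ᶜ (⋂ i ∈ K, F i) := by
      intro x y hxy hx
      simp only [Set.mem_iInter] at hx ⊢
      intro i hi
      refine hd i (Finset.mem_insert_of_mem hi) x y (fun j hj => hxy j ?_) (hx i hi)
      have hne : a ≠ i := fun h => ha (h ▸ hi)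
      have hdis := hdisj a (Finset.mem_insert_self a K) i (Finset.mem_insert_of_mem hi) hne
      exact Set.disjoint_right.mp hdis hj
    rw [indep2 hp0 hp1 (t a) _ _ (hd a (Finset.mem_insert_self a K)) hQdep]
    rw [ih (fun i hi => hd i (Finset.mem_insert_of_mem hi))
      (fun i hi j hj hij => hdisj i (Finset.mem_insert_of_mem hi) j (Finset.mem_insert_of_mem hj) hij)]

end Stmt13
namespace Stmt13
open MeasureTheory

variable {p : ℝ}

lemma measurePreserving_comp_inj (hp0 : 0 ≤ p) (hp1 : p ≤ 1) {M L : ℕ}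
    (v : Fin L → Fin M) (hv : Function.Injective v) :
    MeasurePreserving (fun z : Fin M → Bool => z ∘ v)
      (Measure.pi fun _ : Fin M => bern p) (Measure.pi fun _ : Fin L => bern p) := by
  classical
  haveI := bern_prob hp0 hp1
  haveI : IsProbabilityMeasure (Measure.pi fun _ : {i : Fin M // ¬ i ∈ Set.range v} => bern p) :=
    piBern_prob hp0 hp1
  set e := MeasurableEquiv.piEquivPiSubtypeProd (fun _ : Fin M => Bool) (· ∈ Set.range v) with he
  have hmp := measurePreserving_piEquivPiSubtypeProd (fun _ : Fin M => bern p) (· ∈ Set.range v)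
  rw [← he] at hmp
  have hfst : MeasurePreserving (Prod.fst :
        ({i : Fin M // i ∈ Set.range v} → Bool) × ({i : Fin M // ¬ i ∈ Set.range v} → Bool) →
        ({i : Fin M // i ∈ Set.range v} → Bool))
      ((Measure.pi fun _ : {i : Fin M // i ∈ Set.range v} => bern p).prod
        (Measure.pi fun _ : {i : Fin M // ¬ i ∈ Set.range v} => bern p))
      (Measure.pi fun _ : {i : Fin M // i ∈ Set.range v} => bern p) := by
    refine ⟨measurable_fst, ?_⟩
    rw [Measure.map_fst_prod]
    simp
  have hmp2 : MeasurePreserving (⇑e) (Measure.pi fun _ : Fin M => bern p)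
      ((Measure.pi fun _ : {i : Fin M // i ∈ Set.range v} => bern p).prod
        (Measure.pi fun _ : {i : Fin M // ¬ i ∈ Set.range v} => bern p)) := by
    convert hmp using 2 <;> congr!
  have h1 := hfst.comp hmp2
  set eL : Fin L ≃ {i : Fin M // i ∈ Set.range v} := Equiv.ofInjective v hv with heL
  have h2 := measurePreserving_piCongrLeft (fun _ : {i : Fin M // i ∈ Set.range v} => bern p) eL
  have h3 := h2.symm (MeasurableEquiv.piCongrLeft (fun _ => Bool) eL)
  have h4 := h3.comp h1
  have hfun : (fun z : Fin M → Bool => z ∘ v) =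
      (⇑(MeasurableEquiv.piCongrLeft (fun _ : {i : Fin M // i ∈ Set.range v} => Bool) eL).symm) ∘
        (Prod.fst ∘ ⇑e) := by
    funext z
    funext j
    show (z ∘ v) j = (MeasurableEquiv.piCongrLeft (fun _ => Bool) eL).symm ((e z).1) j
    have hcoe : (MeasurableEquiv.piCongrLeft (fun _ : {i : Fin M // i ∈ Set.range v} => Bool) eL).symm ((e z).1)
        = (Equiv.piCongrLeft (fun _ => Bool) eL).symm ((e z).1) := rfl
    rw [hcoe, Equiv.piCongrLeft_symm_apply]
    rfl
  rw [hfun]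
  exact h4

lemma eval_preimage (hp0 : 0 ≤ p) (hp1 : p ≤ 1) {M L : ℕ}
    (v : Fin L → Fin M) (hv : Function.Injective v) (T : Set (Fin L → Bool)) :
    (Measure.pi fun _ : Fin M => bern p) ((fun z => z ∘ v) ⁻¹' T) =
      (Measure.pi fun _ : Fin L => bern p) T :=
  (measurePreserving_comp_inj hp0 hp1 v hv).measure_preimage
    (measurableSet_all T).nullMeasurableSet

lemma eval_chain (hp0 : 0 ≤ p) (hp1 : p ≤ 1) {M L : ℕ}
    (v : Fin L → Fin M) (hv : Function.Injective v) :
    ((Measure.pi fun _ : Fin M => bern p) {z | noTwoOnes (z ∘ v)}).toReal = Aseq p L := by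
  have h : {z : Fin M → Bool | noTwoOnes (z ∘ v)} = (fun z => z ∘ v) ⁻¹' {x | noTwoOnes x} := rfl
  rw [h, eval_preimage hp0 hp1 v hv, pi_apply_toReal hp0 hp1, Aseq]

lemma lastBit_eq {L : ℕ} (x : Fin (L + 1) → Bool) : lastBit x = x (Fin.last L) := by
  rw [lastBit, dif_pos (by omega : 0 < L + 1)]
  congr 1

lemma eval_chain_loop (hp0 : 0 ≤ p) (hp1 : p ≤ 1) {M L : ℕ}
    (v : Fin (L + 1) → Fin M) (hv : Function.Injective v) :
    ((Measure.pi fun _ : Fin M => bern p)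
      {z | noTwoOnes (z ∘ v) ∧ z (v (Fin.last L)) = false}).toReal = (1 - p) * Aseq p L := by
  have h : {z : Fin M → Bool | noTwoOnes (z ∘ v) ∧ z (v (Fin.last L)) = false} =
      (fun z => z ∘ v) ⁻¹' {x | noTwoOnes x ∧ lastBit x = false} := by
    ext z
    simp only [Set.mem_setOf_eq, Set.mem_preimage, lastBit_eq]
    rfl
  rw [h, eval_preimage hp0 hp1 v hv, pi_apply_toReal hp0 hp1, ← Bseq, Bseq_succ]

end Stmt13
namespace Stmt13
open MeasureTheory

variable {p : ℝ}

lemma aseq_eq (hp0 : 0 ≤ p) (hp1 : p ≤ 1) (k : ℕ) : aseq p k = Aseq p k := by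
  rw [aseq, pi_apply_toReal hp0 hp1, Aseq]

lemma dependsOn_preimage {M L : ℕ} (v : Fin L → Fin M) (T : Set (Fin L → Bool)) :
    DependsOn (Set.range v) ((fun z => z ∘ v) ⁻¹' T) := by
  intro x y hxy hx
  have h : y ∘ v = x ∘ v := funext fun i => (hxy (v i) ⟨i, rfl⟩).symm
  show y ∘ v ∈ T
  rw [h]
  exact hx

lemma Aseq_succ_ge (hp0 : 0 ≤ p) (hp1 : p ≤ 1) (k : ℕ) :
    (1 - p) * Aseq p k ≤ Aseq p (k + 1) := by
  rw [Aseq_succ]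
  have := mul_nonneg hp0 (Bseq_nonneg hp0 hp1 k)
  linarith

lemma glue (hp0 : 0 ≤ p) (hp1 : p ≤ 1) (L : ℕ) :
    ((1 - p) * Aseq p L) * ((1 - p) * Aseq p L) ≤ Aseq p (2 * L + 2) := by
  classical
  haveI : IsProbabilityMeasure (Measure.pi fun _ : Fin (2 * L + 2) => bern p) :=
    piBern_prob hp0 hp1
  set μM := Measure.pi fun _ : Fin (2 * L + 2) => bern p with hμM
  set v1 : Fin (L + 1) → Fin (2 * L + 2) := fun i => ⟨i.val, by omega⟩ with hv1def
  set v2 : Fin (L + 1) → Fin (2 * L + 2) := fun i => ⟨L + 1 + i.val, by omega⟩ with hv2def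
  have hv1 : Function.Injective v1 := by
    intro a b h
    exact Fin.ext (by simpa [hv1def] using congrArg Fin.val h)
  have hv2 : Function.Injective v2 := by
    intro a b h
    have := congrArg Fin.val h
    simp [hv2def] at this
    exact Fin.ext this
  set E1 : Set (Fin (2 * L + 2) → Bool) :=
    {z | noTwoOnes (z ∘ v1) ∧ z (v1 (Fin.last L)) = false} with hE1
  set E2 : Set (Fin (2 * L + 2) → Bool) := {z | noTwoOnes (z ∘ v2)} with hE2
  have hE1pre : E1 = (fun z => z ∘ v1) ⁻¹' {x : Fin (L+1) → Bool | noTwoOnes x ∧ x (Fin.last L) = false} := rfl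
  have hE2pre : E2 = (fun z => z ∘ v2) ⁻¹' {x : Fin (L+1) → Bool | noTwoOnes x} := rfl
  have hdep1 : DependsOn (Set.range v1) E1 := by
    rw [hE1pre]; exact dependsOn_preimage v1 _
  have hdep2 : DependsOn (Set.range v1)ᶜ E2 := by
    rw [hE2pre]
    refine (dependsOn_preimage v2 _).mono ?_
    intro i hi
    obtain ⟨a, rfl⟩ := hi
    intro hmem
    obtain ⟨b, hb⟩ := hmem
    have := congrArg Fin.val hb
    simp [hv1def, hv2def] at this
    omega
  have hindep := indep2 hp0 hp1 (Set.range v1) E1 E2 hdep1 hdep2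
  have hsub : E1 ∩ E2 ⊆ {z | noTwoOnes z} := by
    rintro z ⟨⟨h1, h1'⟩, h2⟩
    intro i hi hcontra
    obtain ⟨c1, c2⟩ := hcontra
    by_cases hiL : i + 1 < L + 1
    · exact h1 i hiL ⟨c1, c2⟩
    · by_cases hiL2 : i = L
      · apply absurd h1'
        have : v1 (Fin.last L) = ⟨i, by omega⟩ := by
          apply Fin.ext; simp [hv1def, hiL2]
        rw [this]
        simp [c1]
      · set t := i - (L + 1) with htdef
        have htL : t + 1 < L + 1 := by omega
        apply h2 t htL
        constructor
        · show z (v2 ⟨t, by omega⟩) = true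
          have heq : v2 ⟨t, by omega⟩ = ⟨i, by omega⟩ := by
            apply Fin.ext; simp [hv2def]; omega
          rw [heq]; exact c1
        · show z (v2 ⟨t + 1, htL⟩) = true
          have heq : v2 ⟨t + 1, htL⟩ = ⟨i + 1, hi⟩ := by
            apply Fin.ext; simp [hv2def]; omega
          rw [heq]; exact c2
  have e1 : (μM E1).toReal = (1 - p) * Aseq p L := eval_chain_loop hp0 hp1 v1 hv1
  have e2 : (μM E2).toReal = Aseq p (L + 1) := eval_chain hp0 hp1 v2 hv2
  have hmono : (μM (E1 ∩ E2)).toReal ≤ (μM {z | noTwoOnes z}).toReal :=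
    ENNReal.toReal_mono (measure_ne_top _ _) (measure_mono hsub)
  have hAeq : (μM {z : Fin (2 * L + 2) → Bool | noTwoOnes z}).toReal = Aseq p (2 * L + 2) := by
    rw [hμM, pi_apply_toReal hp0 hp1, Aseq]
  calc ((1 - p) * Aseq p L) * ((1 - p) * Aseq p L)
      ≤ ((1 - p) * Aseq p L) * Aseq p (L + 1) := by
        apply mul_le_mul_of_nonneg_left (Aseq_succ_ge hp0 hp1 L)
          (mul_nonneg (by linarith) (Aseq_nonneg hp0 hp1 L))
    _ = (μM E1).toReal * (μM E2).toReal := by rw [e1, e2]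
    _ = (μM (E1 ∩ E2)).toReal := by rw [hindep, ENNReal.toReal_mul]
    _ ≤ Aseq p (2 * L + 2) := hAeq ▸ hmono

end Stmt13
namespace Stmt13
open MeasureTheory

variable {p : ℝ}

/-- the dominant root `λ₁` -/
noncomputable def lam (p : ℝ) : ℝ := (1 - p + Real.sqrt ((1 - p) * (1 + 3 * p))) / 2

lemma lam_pos (hp0 : 0 < p) (hp1 : p < 1) : 0 < lam p := by
  rw [lam]
  have h1 : 0 ≤ Real.sqrt ((1 - p) * (1 + 3 * p)) := Real.sqrt_nonneg _
  have h2 : 0 < 1 - p := by linarith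
  linarith

lemma lam_sq (hp0 : 0 ≤ p) (hp1 : p ≤ 1) :
    lam p ^ 2 = (1 - p) * lam p + p * (1 - p) := by
  have hnn : 0 ≤ (1 - p) * (1 + 3 * p) := mul_nonneg (by linarith) (by linarith)
  have hs := Real.sq_sqrt hnn
  rw [lam]
  linear_combination hs / 4

lemma Aseq_one : Aseq p 1 = 1 := by
  rw [Aseq_succ, Aseq_zero, Bseq_zero]; ring

lemma Aseq_two : Aseq p 2 = 1 - p ^ 2 := by
  rw [Aseq_rec, Aseq_one, Aseq_zero]; ring

lemma A2_le_lam (hp0 : 0 < p) (hp1 : p < 1) : Aseq p 2 ≤ lam p := by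
  rw [Aseq_two, lam]
  have hnn : 0 ≤ (1 - p) * (1 + 3 * p) := mul_nonneg (by linarith) (by linarith)
  have h1 : (1 - p) * (1 + 2 * p) ≤ Real.sqrt ((1 - p) * (1 + 3 * p)) := by
    rw [show (1 - p) * (1 + 2 * p) = Real.sqrt (((1 - p) * (1 + 2 * p))^2) from
      (Real.sqrt_sq (by nlinarith)).symm]
    apply Real.sqrt_le_sqrt
    have key : (1 - p) * (1 + 3 * p) - ((1 - p) * (1 + 2 * p))^2 = 4 * p^3 * (1 - p) := by ring
    have hpos : 0 ≤ 4 * p^3 * (1 - p) := mul_nonneg (by positivity) (by linarith)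
    linarith
  nlinarith

lemma Aseq_le_lam_pow (hp0 : 0 < p) (hp1 : p < 1) : ∀ k : ℕ, Aseq p (k + 1) ≤ lam p ^ k := by
  intro k
  induction k using Nat.strong_induction_on with
  | _ k ih =>
    match k with
    | 0 => rw [Aseq_one, pow_zero]
    | 1 => rw [pow_one]; exact A2_le_lam hp0 hp1
    | (k + 2) =>
      rw [Aseq_rec]
      have h1 := ih (k + 1) (by omega)
      have h2 := ih k (by omega)
      have hlp : 0 < lam p := lam_pos hp0 hp1
      have hlk : (0:ℝ) ≤ lam p ^ k := le_of_lt (pow_pos hlp k)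
      have hstep : (1 - p) * Aseq p (k + 2) + p * (1 - p) * Aseq p (k + 1)
          ≤ (1 - p) * lam p ^ (k + 1) + p * (1 - p) * lam p ^ k := by
        have a1 : (1 - p) * Aseq p (k + 2) ≤ (1 - p) * lam p ^ (k + 1) :=
          mul_le_mul_of_nonneg_left h1 (by linarith)
        have a2 : p * (1 - p) * Aseq p (k + 1) ≤ p * (1 - p) * lam p ^ k :=
          mul_le_mul_of_nonneg_left h2 (by nlinarith)
        linarith
      refine hstep.trans ?_
      have : lam p ^ (k + 2) = lam p ^ k * lam p ^ 2 := by ring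
      rw [this, lam_sq hp0.le hp1.le]
      ring_nf
      nlinarith [sq_nonneg (lam p)]

end Stmt13
namespace Stmt13

/-- vertex `j` of the chain through residue classes `r` (odd positions) and `s`
(even positions), for a chain of `c` elements per class, with common difference `d`. -/
def chV (d r s c : ℕ) (j : ℕ) : ℕ :=
  if j % 2 = 0 then s + (c - 1 - j / 2) * d else r + (j / 2) * d

section chain
variable {d r s c m n : ℕ}
  (hd : 0 < d) (hrs : r + s + (c - 1) * d = m) (hnm : n + d = m) (hc : 1 ≤ c)

include hd hrs hnm hc

lemma chV_adj (j : ℕ) (hj : j + 1 < 2 * c) :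
    chV d r s c j + chV d r s c (j + 1) = m ∨ chV d r s c j + chV d r s c (j + 1) = n := by
  rcases Nat.even_or_odd j with he | ho
  · left
    obtain ⟨t, rfl⟩ := he
    have h0 : t + t = 2 * t := by ring
    have hmod : (t + t) % 2 = 0 := by omega
    have hmod1 : (t + t + 1) % 2 = 1 := by omega
    have hdiv : (t + t) / 2 = t := by omega
    have hdiv1 : (t + t + 1) / 2 = t := by omega
    rw [chV, chV, if_pos hmod, if_neg (by omega), hdiv, hdiv1]
    have ht : t ≤ c - 1 := by omega
    have : (c - 1 - t) * d + t * d = (c - 1) * d := by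
      rw [← Nat.add_mul]
      congr 1
      omega
    omega
  · right
    obtain ⟨t, rfl⟩ := ho
    have hmod : (2 * t + 1) % 2 = 1 := by omega
    have hmod1 : (2 * t + 1 + 1) % 2 = 0 := by omega
    have hdiv : (2 * t + 1) / 2 = t := by omega
    have hdiv1 : (2 * t + 1 + 1) / 2 = t + 1 := by omega
    rw [chV, chV, if_neg (by omega), if_pos hmod1, hdiv, hdiv1]
    have ht : t + 1 ≤ c - 1 := by omega
    have hsum : t * d + (c - 1 - (t + 1)) * d = (c - 2) * d := by
      rw [← Nat.add_mul]
      congr 1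
      omega
    have hc2 : 2 ≤ c := by omega
    have hkey : (c - 2) * d + d = (c - 1) * d := by
      have : c - 1 = (c - 2) + 1 := by omega
      rw [this, Nat.add_mul, one_mul]
    omega

lemma chV_le (j : ℕ) (hj : j < 2 * c) : chV d r s c j ≤ m := by
  rw [chV]
  rcases Nat.decEq (j % 2) 0 with h | h
  case isTrue =>
    rw [if_pos h]
    have h1 : (c - 1 - j / 2) * d ≤ (c - 1) * d := Nat.mul_le_mul_right d (by omega)
    omega
  case isFalse =>
    rw [if_neg h]
    have h2 : j / 2 ≤ c - 1 := by omega
    have h1 : (j / 2) * d ≤ (c - 1) * d := Nat.mul_le_mul_right d h2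
    omega

lemma chV_mod (j : ℕ) (hr : r < d) (hs : s < d) :
    chV d r s c j % d = (if j % 2 = 0 then s else r) := by
  rw [chV]
  rcases Nat.decEq (j % 2) 0 with h | h
  case isTrue =>
    rw [if_pos h, if_pos h, Nat.add_mul_mod_self_right, Nat.mod_eq_of_lt hs]
  case isFalse =>
    rw [if_neg h, if_neg h, Nat.add_mul_mod_self_right, Nat.mod_eq_of_lt hr]

lemma chV_inj_pair (hrns : r ≠ s) (hr : r < d) (hs : s < d) (j j' : ℕ)
    (hj : j < 2 * c) (hj' : j' < 2 * c) (heq : chV d r s c j = chV d r s c j') : j = j' := by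
  have hm1 := chV_mod hd hrs hnm hc j hr hs
  have hm2 := chV_mod hd hrs hnm hc j' hr hs
  have hmm : (if j % 2 = 0 then s else r) = (if j' % 2 = 0 then s else r) := by
    rw [← hm1, ← hm2, heq]
  have hpar : j % 2 = j' % 2 := by
    rcases Nat.decEq (j % 2) 0 with h | h <;> rcases Nat.decEq (j' % 2) 0 with h' | h'
    case isTrue.isTrue => omega
    case isFalse.isFalse => omega
    case isTrue.isFalse => rw [if_pos h, if_neg h'] at hmm; omega
    case isFalse.isTrue => rw [if_neg h, if_pos h'] at hmm; omega
  rw [chV, chV, hpar] at heq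
  rcases Nat.decEq (j' % 2) 0 with h | h
  case isTrue =>
    rw [if_pos h, if_pos h] at heq
    have := Nat.eq_of_mul_eq_mul_right hd (Nat.add_left_cancel heq)
    omega
  case isFalse =>
    rw [if_neg h, if_neg h] at heq
    have := Nat.eq_of_mul_eq_mul_right hd (Nat.add_left_cancel heq)
    omega

lemma chV_inj_loop (j j' : ℕ) (hj : j < c) (hj' : j' < c)
    (heq : chV d r r c j = chV d r r c j') : j = j' := by
  rw [chV, chV] at heq
  rcases Nat.decEq (j % 2) 0 with h | h <;> rcases Nat.decEq (j' % 2) 0 with h' | h'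
  case isTrue.isTrue =>
    rw [if_pos h, if_pos h'] at heq
    have := Nat.eq_of_mul_eq_mul_right hd (Nat.add_left_cancel heq)
    omega
  case isFalse.isFalse =>
    rw [if_neg h, if_neg h'] at heq
    have := Nat.eq_of_mul_eq_mul_right hd (Nat.add_left_cancel heq)
    omega
  case isTrue.isFalse =>
    rw [if_pos h, if_neg h'] at heq
    have := Nat.eq_of_mul_eq_mul_right hd (Nat.add_left_cancel heq)
    omega
  case isFalse.isTrue =>
    rw [if_neg h, if_pos h'] at heq
    have := Nat.eq_of_mul_eq_mul_right hd (Nat.add_left_cancel heq)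
    omega

omit hrs in
lemma chV_loop_last (hrr : r + r + (c - 1) * d = m) :
    2 * chV d r r c (c - 1) = m ∨ 2 * chV d r r c (c - 1) = n := by
  rw [chV]
  rcases Nat.decEq ((c - 1) % 2) 0 with h | h
  case isTrue =>
    left
    rw [if_pos h]
    have h1 : c - 1 - (c - 1) / 2 = (c - 1) / 2 := by omega
    rw [h1]
    have h2 : (c - 1) / 2 * d + (c - 1) / 2 * d = (c - 1) * d := by
      rw [← Nat.add_mul]
      congr 1
      omega
    omega
  case isFalse =>
    right
    rw [if_neg h]
    have h2 : (c - 1) / 2 * d + (c - 1) / 2 * d + d = (c - 1) * d := by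
      have ha : (c - 1) / 2 * d + (c - 1) / 2 * d + d = ((c-1)/2 + (c-1)/2 + 1) * d := by ring
      rw [ha]
      congr 1
      omega
    omega

end chain
end Stmt13
namespace Stmt13
open MeasureTheory

variable {p : ℝ}

/-- partner residue class -/
def partnerF (d d1 : ℕ) (r : ℕ) : ℕ := if r < d1 then d1 - 1 - r else d + d1 - 1 - r

/-- class size -/
def ccF (l d1 : ℕ) (r : ℕ) : ℕ := if r < d1 then l + 1 else l

/-- chain length -/
def LenF (d l d1 : ℕ) (r : ℕ) : ℕ :=
  if r = partnerF d d1 r then ccF l d1 r else 2 * ccF l d1 r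

/-- chain vertices, as elements of `Fin (N+1)` (clamped to stay in range) -/
def VchF (N m d l d1 : ℕ) (r j : ℕ) : Fin (N + 1) :=
  ⟨min (chV d r (partnerF d d1 r) (ccF l d1 r) j) (min m N), by omega⟩

/-- the event along a chain: no two consecutive ones, and (for loops) last bit zero -/
def chT (L : ℕ) (loop : Prop) : Set (Fin L → Bool) :=
  {x | noTwoOnes x ∧ (loop → ∀ hj : L - 1 < L, x ⟨L - 1, hj⟩ = false)}

/-- the chain event in the ambient space -/
def FevF (N m d l d1 : ℕ) (r : ℕ) : Set (Fin (N + 1) → Bool) :=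
  (fun z => z ∘ fun j : Fin (LenF d l d1 r) => VchF N m d l d1 r j.val) ⁻¹'
    chT (LenF d l d1 r) (r = partnerF d d1 r)

lemma VchF_val {N m d l d1 r j : ℕ} (hmN : m ≤ N)
    (hle : chV d r (partnerF d d1 r) (ccF l d1 r) j ≤ m) :
    (VchF N m d l d1 r j : ℕ) = chV d r (partnerF d d1 r) (ccF l d1 r) j := by
  simp only [VchF]
  omega

lemma chT_eval_pair (hp0 : 0 ≤ p) (hp1 : p ≤ 1) {M L : ℕ} (v : Fin L → Fin M)
    (hv : Function.Injective v) (loop : Prop) (hnl : ¬ loop) :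
    ((Measure.pi fun _ : Fin M => bern p) ((fun z => z ∘ v) ⁻¹' chT L loop)).toReal
      = Aseq p L := by
  have h : chT L loop = {x | noTwoOnes x} := by
    ext x; simp [chT, hnl]
  rw [h, eval_preimage hp0 hp1 v hv, pi_apply_toReal hp0 hp1, Aseq]

lemma chT_eval_loop (hp0 : 0 ≤ p) (hp1 : p ≤ 1) {M L : ℕ} (hL : 1 ≤ L) (v : Fin L → Fin M)
    (hv : Function.Injective v) (loop : Prop) (hl : loop) :
    ((Measure.pi fun _ : Fin M => bern p) ((fun z => z ∘ v) ⁻¹' chT L loop)).toReal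
      = (1 - p) * Aseq p (L - 1) := by
  cases L with
  | zero => omega
  | succ L' =>
    have h : chT (L' + 1) loop = {x : Fin (L' + 1) → Bool | noTwoOnes x ∧ x (Fin.last L') = false} := by
      ext x
      simp only [chT, Set.mem_setOf_eq]
      constructor
      · rintro ⟨h1, h2⟩
        refine ⟨h1, ?_⟩
        have := h2 hl (by omega)
        convert this using 2
        exact Fin.ext (by simp)
      · rintro ⟨h1, h2⟩
        refine ⟨h1, fun _ hj => ?_⟩
        convert h2 using 2
        exact Fin.ext (by simp)
    rw [h]
    have hset : ((fun z : Fin M → Bool => z ∘ v) ⁻¹'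
        {x : Fin (L' + 1) → Bool | noTwoOnes x ∧ x (Fin.last L') = false})
        = {z | noTwoOnes (z ∘ v) ∧ z (v (Fin.last L')) = false} := rfl
    rw [hset, eval_chain_loop hp0 hp1 v hv]
    simp

section mainbound

variable {N m n d l d1 d2 : ℕ}

/-- all the arithmetic facts packaged -/
structure ArithCtx (N m n d l d1 d2 : ℕ) : Prop where
  hmN : m ≤ N
  hnm : n + d = m
  hd : 0 < d
  hl : 1 ≤ l
  hm1 : m + 1 = l * d + d1
  hld : l * d = n + 1 + d2
  hd1 : 1 ≤ d1
  hdd : d1 + d2 = d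

lemma fam_props (hc : ArithCtx N m n d l d1 d2) (r : ℕ) (hrd : r < d) :
    (r + partnerF d d1 r + (ccF l d1 r - 1) * d = m) ∧ partnerF d d1 r < d ∧ 1 ≤ ccF l d1 r := by
  obtain ⟨hmN, hnm, hd, hl, hm1, hld, hd1, hdd⟩ := hc
  have hll : l - 1 + 1 = l := by omega
  have hP1 : (l - 1) * d + d = l * d := by
    calc (l - 1) * d + d = ((l - 1) + 1) * d := by ring
      _ = l * d := by rw [hll]
  by_cases hcc : r < d1
  · refine ⟨?_, ?_, ?_⟩ <;>
      simp only [partnerF, ccF, if_pos hcc, Nat.add_sub_cancel] <;>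
      generalize l * d = Q at hm1 hld ⊢ <;> omega
  · refine ⟨?_, ?_, ?_⟩ <;>
      simp only [partnerF, ccF, if_neg hcc, Nat.add_sub_cancel] <;>
      generalize hg : (l - 1) * d = Q2 at hP1 ⊢ <;>
      generalize l * d = Q at hm1 hld hP1 ⊢ <;> omega

lemma partner_invol (hc : ArithCtx N m n d l d1 d2) (r : ℕ) (hrd : r < d) :
    partnerF d d1 (partnerF d d1 r) = r := by
  obtain ⟨hmN, hnm, hd, hl, hm1, hld, hd1, hdd⟩ := hc
  simp only [partnerF]
  by_cases hcc : r < d1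
  · simp only [if_pos hcc]
    split <;> omega
  · simp only [if_neg hcc]
    split <;> omega

lemma LenF_pos (hc : ArithCtx N m n d l d1 d2) (r : ℕ) : 1 ≤ LenF d l d1 r := by
  obtain ⟨hmN, hnm, hd, hl, hm1, hld, hd1, hdd⟩ := hc
  simp only [LenF, ccF]
  split <;> split <;> omega

lemma LenF_le (r : ℕ) : LenF d l d1 r ≤ 2 * ccF l d1 r := by
  simp only [LenF]
  split <;> omega

end mainbound
end Stmt13
namespace Stmt13
open MeasureTheory

variable {p : ℝ} {N m n d l d1 d2 : ℕ}

lemma chV_le' (hc : ArithCtx N m n d l d1 d2) (r : ℕ) (hrd : r < d) (j : ℕ)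
    (hj : j < 2 * ccF l d1 r) :
    chV d r (partnerF d d1 r) (ccF l d1 r) j ≤ m := by
  obtain ⟨h1, h2, h3⟩ := fam_props hc r hrd
  exact chV_le hc.hd h1 hc.hnm h3 j hj

lemma vch_inj (hc : ArithCtx N m n d l d1 d2) (r : ℕ) (hrd : r < d) :
    Function.Injective (fun j : Fin (LenF d l d1 r) => VchF N m d l d1 r j.val) := by
  obtain ⟨h1, h2, h3⟩ := fam_props hc r hrd
  intro j j' heq
  have hval := congrArg Fin.val heq
  have hj : (j : ℕ) < 2 * ccF l d1 r := lt_of_lt_of_le j.isLt (LenF_le r)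
  have hj' : (j' : ℕ) < 2 * ccF l d1 r := lt_of_lt_of_le j'.isLt (LenF_le r)
  rw [VchF_val hc.hmN (chV_le' hc r hrd j hj), VchF_val hc.hmN (chV_le' hc r hrd j' hj')] at hval
  apply Fin.ext
  by_cases hloop : r = partnerF d d1 r
  · have hLen : LenF d l d1 r = ccF l d1 r := if_pos hloop
    rw [← hloop] at hval
    exact chV_inj_loop hc.hd (by rw [← hloop] at h1; exact h1) hc.hnm h3
      j j' (by have := j.isLt; omega) (by have := j'.isLt; omega) hval
  · exact chV_inj_pair hc.hd h1 hc.hnm h3 (fun hcon => hloop hcon) hrd h2 j j' hj hj' hval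

lemma E_sub (hc : ArithCtx N m n d l d1 d2) (r : ℕ) (hrd : r < d) :
    {ω : Fin (N + 1) → Bool | ¬ inSumset ω m ∧ ¬ inSumset ω n} ⊆ FevF N m d l d1 r := by
  obtain ⟨h1, h2, h3⟩ := fam_props hc r hrd
  rintro z ⟨hzm, hzn⟩
  show (z ∘ fun j : Fin (LenF d l d1 r) => VchF N m d l d1 r j.val) ∈ chT _ _
  constructor
  · intro j hj hcontra
    obtain ⟨c1, c2⟩ := hcontra
    have hj2 : j + 1 < 2 * ccF l d1 r := lt_of_lt_of_le hj (LenF_le r)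
    have hadj := chV_adj hc.hd h1 hc.hnm h3 j hj2
    set a : Fin (N+1) := VchF N m d l d1 r j with ha
    set b : Fin (N+1) := VchF N m d l d1 r (j+1) with hb
    have hav : (a : ℕ) = chV d r (partnerF d d1 r) (ccF l d1 r) j :=
      VchF_val hc.hmN (chV_le' hc r hrd j (by omega))
    have hbv : (b : ℕ) = chV d r (partnerF d d1 r) (ccF l d1 r) (j+1) :=
      VchF_val hc.hmN (chV_le' hc r hrd (j+1) hj2)
    have hc1 : z a = true := c1
    have hc2 : z b = true := c2
    rcases hadj with hsum | hsum
    · exact hzm ⟨a, b, hc1, hc2, by omega⟩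
    · exact hzn ⟨a, b, hc1, hc2, by omega⟩
  · intro hloop hj
    set a : Fin (N+1) := VchF N m d l d1 r (LenF d l d1 r - 1) with ha
    have hLen : LenF d l d1 r = ccF l d1 r := if_pos hloop
    have hav : (a : ℕ) = chV d r (partnerF d d1 r) (ccF l d1 r) (LenF d l d1 r - 1) :=
      VchF_val hc.hmN (chV_le' hc r hrd _ (by omega))
    have hlast := chV_loop_last hc.hd hc.hnm h3 (r := r)
      (by rw [← hloop] at h1; exact h1)
    rw [← hloop, hLen] at hav
    by_contra hcon
    have hz : z a = true := by
      rcases Bool.eq_false_or_eq_true (z a) with h | h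
      · exact h
      · exact absurd (show (z ∘ fun j : Fin (LenF d l d1 r) => VchF N m d l d1 r j.val)
            ⟨LenF d l d1 r - 1, hj⟩ = false from h) hcon
    rcases hlast with hsum | hsum
    · exact hzm ⟨a, a, hz, hz, by omega⟩
    · exact hzn ⟨a, a, hz, hz, by omega⟩

lemma Fev_dep (r : ℕ) :
    DependsOn (Set.range fun j : Fin (LenF d l d1 r) => VchF N m d l d1 r j.val)
      (FevF N m d l d1 r) :=
  dependsOn_preimage _ _

lemma range_mod (hc : ArithCtx N m n d l d1 d2) (r : ℕ) (hrd : r < d)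
    (i : Fin (N + 1)) (hi : i ∈ Set.range fun j : Fin (LenF d l d1 r) => VchF N m d l d1 r j.val) :
    (i : ℕ) % d = r ∨ (i : ℕ) % d = partnerF d d1 r := by
  obtain ⟨h1, h2, h3⟩ := fam_props hc r hrd
  obtain ⟨j, rfl⟩ := hi
  have hj : (j : ℕ) < 2 * ccF l d1 r := lt_of_lt_of_le j.isLt (LenF_le r)
  have hval : (VchF N m d l d1 r j.val : ℕ) = chV d r (partnerF d d1 r) (ccF l d1 r) j.val :=
    VchF_val hc.hmN (chV_le' hc r hrd j hj)
  rw [hval, chV_mod hc.hd h1 hc.hnm h3 j.val hrd h2]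
  split
  · right; rfl
  · left; rfl

lemma range_disj (hc : ArithCtx N m n d l d1 d2) (r r' : ℕ) (hrd : r < d) (hrd' : r' < d)
    (hle : r ≤ partnerF d d1 r) (hle' : r' ≤ partnerF d d1 r') (hne : r ≠ r') :
    Disjoint (Set.range fun j : Fin (LenF d l d1 r) => VchF N m d l d1 r j.val)
      (Set.range fun j : Fin (LenF d l d1 r') => VchF N m d l d1 r' j.val) := by
  rw [Set.disjoint_left]
  intro i hi hi'
  have hm1 := range_mod hc r hrd i hi
  have hm2 := range_mod hc r' hrd' i hi'
  have hinv := partner_invol hc r hrd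
  have hinv' := partner_invol hc r' hrd'
  rcases hm1 with h | h <;> rcases hm2 with h' | h'
  · omega
  · -- i % d = r and i % d = partner r'
    have hx : partnerF d d1 r' = r := by omega
    have h2 : partnerF d d1 r = r' := by rw [← hx]; exact hinv'
    omega
  · have hx : partnerF d d1 r = r' := by omega
    have h2 : partnerF d d1 r' = r := by rw [← hx]; exact hinv
    omega
  · have hx : partnerF d d1 r = partnerF d d1 r' := by omega
    have h2 : r = r' := by rw [← hinv, ← hinv', hx]
    omega

end Stmt13
namespace Stmt13
open MeasureTheory

variable {p : ℝ} {N m n d l d1 d2 : ℕ}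

lemma Fev_eval (hp0 : 0 ≤ p) (hp1 : p ≤ 1) (hc : ArithCtx N m n d l d1 d2)
    (r : ℕ) (hrd : r < d) :
    ((Measure.pi fun _ : Fin (N + 1) => bern p) (FevF N m d l d1 r)).toReal =
      if r = partnerF d d1 r then (1 - p) * Aseq p (ccF l d1 r - 1)
      else Aseq p (2 * ccF l d1 r) := by
  by_cases hloop : r = partnerF d d1 r
  · rw [if_pos hloop]
    have hLen : LenF d l d1 r = ccF l d1 r := if_pos hloop
    rw [FevF, chT_eval_loop hp0 hp1 (LenF_pos hc r) _ (vch_inj hc r hrd) _ hloop, hLen]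
  · rw [if_neg hloop]
    have hLen : LenF d l d1 r = 2 * ccF l d1 r := if_neg hloop
    rw [FevF, chT_eval_pair hp0 hp1 _ (vch_inj hc r hrd) _ hloop, hLen]

lemma main_bound (hp0 : 0 ≤ p) (hp1 : p ≤ 1) (hc : ArithCtx N m n d l d1 d2) :
    ((Measure.pi fun _ : Fin (N + 1) => bern p)
        {ω : Fin (N + 1) → Bool | ¬ inSumset ω m ∧ ¬ inSumset ω n}).toReal ≤
      Aseq p (2 * l + 2) ^ (d1 / 2) * ((1 - p) * Aseq p l) ^ (d1 % 2) *
        (Aseq p (2 * l) ^ (d2 / 2) * ((1 - p) * Aseq p (l - 1)) ^ (d2 % 2)) := by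
  classical
  haveI : IsProbabilityMeasure (Measure.pi fun _ : Fin (N + 1) => bern p) :=
    piBern_prob hp0 hp1
  have hd := hc.hd; have hl := hc.hl; have hd1 := hc.hd1; have hdd := hc.hdd
  set K1 : Finset ℕ := Finset.range (d1 / 2) with hK1
  set K1L : Finset ℕ := (Finset.range (d1 % 2)).image fun _ => d1 / 2 with hK1L
  set K2 : Finset ℕ := (Finset.range (d2 / 2)).image fun t => d1 + t with hK2
  set K2L : Finset ℕ := (Finset.range (d2 % 2)).image fun _ => d1 + d2 / 2 with hK2L
  set K : Finset ℕ := K1 ∪ K1L ∪ K2 ∪ K2L with hK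
  have hKprops : ∀ r ∈ K, r < d ∧ r ≤ partnerF d d1 r := by
    intro r hr
    simp only [hK, hK1, hK1L, hK2, hK2L, Finset.mem_union, Finset.mem_image,
      Finset.mem_range] at hr
    unfold partnerF
    rcases hr with ((h | ⟨t, ht, rfl⟩) | ⟨t, ht, rfl⟩) | ⟨t, ht, rfl⟩
    · refine ⟨by omega, ?_⟩
      rw [if_pos (by omega)]
      omega
    · refine ⟨by omega, ?_⟩
      rw [if_pos (by omega)]
      omega
    · refine ⟨by omega, ?_⟩
      rw [if_neg (by omega)]
      omega
    · refine ⟨by omega, ?_⟩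
      rw [if_neg (by omega)]
      omega
  set T : ℕ → Set (Fin (N + 1)) :=
    fun r => Set.range fun j : Fin (LenF d l d1 r) => VchF N m d l d1 r j.val with hT
  set F : ℕ → Set (Fin (N + 1) → Bool) := fun r => FevF N m d l d1 r with hF
  have hμ := indepn hp0 hp1 K T F (fun r _ => Fev_dep r)
    (fun r hr r' hr' hne => range_disj hc r r' (hKprops _ hr).1 (hKprops _ hr').1
      (hKprops _ hr).2 (hKprops _ hr').2 hne)
  have hEsub : {ω : Fin (N + 1) → Bool | ¬ inSumset ω m ∧ ¬ inSumset ω n} ⊆ ⋂ r ∈ K, F r :=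
    Set.subset_iInter₂ fun r hr => E_sub hc r (hKprops r hr).1
  have h2 : ((Measure.pi fun _ : Fin (N + 1) => bern p)
      {ω : Fin (N + 1) → Bool | ¬ inSumset ω m ∧ ¬ inSumset ω n}).toReal ≤
      ∏ r ∈ K, ((Measure.pi fun _ : Fin (N + 1) => bern p) (F r)).toReal := by
    calc ((Measure.pi fun _ : Fin (N + 1) => bern p)
          {ω : Fin (N + 1) → Bool | ¬ inSumset ω m ∧ ¬ inSumset ω n}).toReal
        ≤ ((Measure.pi fun _ : Fin (N + 1) => bern p) (⋂ r ∈ K, F r)).toReal :=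
          ENNReal.toReal_mono (measure_ne_top _ _) (measure_mono hEsub)
      _ = (∏ r ∈ K, (Measure.pi fun _ : Fin (N + 1) => bern p) (F r)).toReal := by rw [hμ]
      _ = ∏ r ∈ K, ((Measure.pi fun _ : Fin (N + 1) => bern p) (F r)).toReal :=
          by rw [ENNReal.toReal_prod]
  refine h2.trans ?_
  -- disjointness of the four pieces
  have hdisj1 : Disjoint K1 K1L := by
    rw [Finset.disjoint_left]
    intro a ha ha'
    simp only [hK1, hK1L, Finset.mem_range, Finset.mem_image] at ha ha'
    omega
  have hdisj2 : Disjoint (K1 ∪ K1L) K2 := by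
    rw [Finset.disjoint_left]
    intro a ha ha'
    simp only [hK1, hK1L, hK2, Finset.mem_union, Finset.mem_range, Finset.mem_image] at ha ha'
    omega
  have hdisj3 : Disjoint (K1 ∪ K1L ∪ K2) K2L := by
    rw [Finset.disjoint_left]
    intro a ha ha'
    simp only [hK1, hK1L, hK2, hK2L, Finset.mem_union, Finset.mem_range,
      Finset.mem_image] at ha ha'
    omega
  rw [hK, Finset.prod_union hdisj3, Finset.prod_union hdisj2, Finset.prod_union hdisj1]
  have hP1 : ∏ r ∈ K1, ((Measure.pi fun _ : Fin (N + 1) => bern p) (F r)).toReal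
      = Aseq p (2 * l + 2) ^ (d1 / 2) := by
    have hconst : ∀ r ∈ K1, ((Measure.pi fun _ : Fin (N + 1) => bern p) (F r)).toReal
        = Aseq p (2 * l + 2) := by
      intro r hr
      simp only [hK1, Finset.mem_range] at hr
      have hrd1 : r < d1 := by omega
      have hrd : r < d := by omega
      rw [hF, Fev_eval hp0 hp1 hc r hrd, if_neg, ccF, if_pos hrd1]
      · congr 1
      · unfold partnerF
        rw [if_pos hrd1]
        omega
    rw [Finset.prod_congr rfl hconst, Finset.prod_const, hK1, Finset.card_range]
  have hP2 : ∏ r ∈ K1L, ((Measure.pi fun _ : Fin (N + 1) => bern p) (F r)).toReal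
      = ((1 - p) * Aseq p l) ^ (d1 % 2) := by
    rw [hK1L, Finset.prod_image (by intro x hx y hy _; simp only [Finset.mem_coe, Finset.mem_range] at hx hy; omega)]
    have hconst : ∀ t ∈ Finset.range (d1 % 2),
        ((Measure.pi fun _ : Fin (N + 1) => bern p) (F (d1 / 2))).toReal
        = (1 - p) * Aseq p l := by
      intro t ht
      simp only [Finset.mem_range] at ht
      have hrd1 : d1 / 2 < d1 := by omega
      have hrd : d1 / 2 < d := by omega
      rw [hF, Fev_eval hp0 hp1 hc _ hrd, if_pos, ccF, if_pos hrd1]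
      · congr 2
      · unfold partnerF
        rw [if_pos hrd1]
        omega
    rw [Finset.prod_congr rfl hconst, Finset.prod_const, Finset.card_range]
  have hP3 : ∏ r ∈ K2, ((Measure.pi fun _ : Fin (N + 1) => bern p) (F r)).toReal
      = Aseq p (2 * l) ^ (d2 / 2) := by
    rw [hK2, Finset.prod_image (by intro x hx y hy hxy; simp only at hxy; omega)]
    have hconst : ∀ t ∈ Finset.range (d2 / 2),
        ((Measure.pi fun _ : Fin (N + 1) => bern p) (F (d1 + t))).toReal
        = Aseq p (2 * l) := by
      intro t ht
      simp only [Finset.mem_range] at ht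
      have hrd1 : ¬ (d1 + t < d1) := by omega
      have hrd : d1 + t < d := by omega
      rw [hF, Fev_eval hp0 hp1 hc _ hrd, if_neg, ccF, if_neg hrd1]
      unfold partnerF
      rw [if_neg hrd1]
      omega
    rw [Finset.prod_congr rfl hconst, Finset.prod_const, Finset.card_range]
  have hP4 : ∏ r ∈ K2L, ((Measure.pi fun _ : Fin (N + 1) => bern p) (F r)).toReal
      = ((1 - p) * Aseq p (l - 1)) ^ (d2 % 2) := by
    rw [hK2L, Finset.prod_image (by intro x hx y hy _; simp only [Finset.mem_coe, Finset.mem_range] at hx hy; omega)]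
    have hconst : ∀ t ∈ Finset.range (d2 % 2),
        ((Measure.pi fun _ : Fin (N + 1) => bern p) (F (d1 + d2 / 2))).toReal
        = (1 - p) * Aseq p (l - 1) := by
      intro t ht
      simp only [Finset.mem_range] at ht
      have hrd1 : ¬ (d1 + d2 / 2 < d1) := by omega
      have hrd : d1 + d2 / 2 < d := by omega
      rw [hF, Fev_eval hp0 hp1 hc _ hrd, if_pos, ccF, if_neg hrd1]
      unfold partnerF
      rw [if_neg hrd1]
      omega
    rw [Finset.prod_congr rfl hconst, Finset.prod_const, Finset.card_range]
  rw [hP1, hP2, hP3, hP4]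
  apply le_of_eq
  ring

end Stmt13
namespace Stmt13

lemma rpow_combine {X u : ℝ} (hX : 0 < X) (hu : 0 ≤ u) (h2 : u * u ≤ X) (k : ℕ) :
    X ^ (k / 2) * u ^ (k % 2) ≤ X ^ ((k : ℝ) / 2) := by
  have hXk : (0:ℝ) ≤ X ^ (k / 2) := pow_nonneg hX.le _
  have hexp : ((k : ℝ) / 2) = ((k / 2 : ℕ) : ℝ) + ((k % 2 : ℕ) : ℝ) / 2 := by
    have hk : k = 2 * (k / 2) + k % 2 := (Nat.div_add_mod k 2).symm
    have hkR : (k : ℝ) = 2 * ((k / 2 : ℕ) : ℝ) + ((k % 2 : ℕ) : ℝ) := by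
      exact_mod_cast congrArg (Nat.cast : ℕ → ℝ) hk
    rw [hkR]; ring
  rw [hexp, Real.rpow_add hX, Real.rpow_natCast]
  apply mul_le_mul_of_nonneg_left _ hXk
  rcases Nat.mod_two_eq_zero_or_one k with h | h
  · rw [h]
    norm_num
  · rw [h]
    simp only [pow_one, Nat.cast_one]
    rw [← Real.sqrt_eq_rpow]
    exact (Real.le_sqrt hu hX.le).2 (by nlinarith)

end Stmt13

/-- `(1-p)·a_{l-1} ≤ √(a_{2l})` for `l ≥ 2`, and the exponential upper bounds
`P(m, n ∉ A+A) ≤ a_{2l+2}^(d₁/2)·a_{2l}^(d₂/2)` and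
`P(m, n ∉ A+A) ≤ λ₁^(1+(m+n)/2)`. -/
theorem stmt13 (p : ℝ) (hp0 : 0 < p) (hp1 : p < 1) (N : ℕ) :
    (∀ l : ℕ, 2 ≤ l → (1 - p) * aseq p (l - 1) ≤ Real.sqrt (aseq p (2 * l))) ∧
    ∀ m n : ℕ, n < m → m ≤ N →
      ∀ l d1 d2 : ℕ,
        (l : ℤ) = ⌈((n : ℚ) + 1) / ((m : ℚ) - (n : ℚ))⌉ →
        (d1 : ℤ) = ((m : ℤ) + 1) - (l : ℤ) * ((m : ℤ) - (n : ℤ)) →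
        (d2 : ℤ) = (l : ℤ) * ((m : ℤ) - (n : ℤ)) - ((n : ℤ) + 1) →
        (prodBern p N {ω | ¬ inSumset ω m ∧ ¬ inSumset ω n}).toReal ≤
            aseq p (2 * l + 2) ^ ((d1 : ℝ) / 2) * aseq p (2 * l) ^ ((d2 : ℝ) / 2) ∧
        (prodBern p N {ω | ¬ inSumset ω m ∧ ¬ inSumset ω n}).toReal ≤
            ((1 - p + Real.sqrt ((1 - p) * (1 + 3 * p))) / 2) ^ (1 + ((m : ℝ) + (n : ℝ)) / 2) := by
  open MeasureTheory Stmt13 in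
  have hp0' : 0 ≤ p := hp0.le
  have hp1' : p ≤ 1 := hp1.le
  constructor
  · intro l hl
    rw [aseq_eq hp0' hp1', aseq_eq hp0' hp1']
    have hL : 2 * l = 2 * (l - 1) + 2 := by omega
    rw [hL]
    refine (Real.le_sqrt (mul_nonneg (by linarith) (Aseq_nonneg hp0' hp1' _))
      (Aseq_nonneg hp0' hp1' _)).2 ?_
    rw [pow_two]
    exact glue hp0' hp1' (l - 1)
  · intro m n hnm hmN l d1 d2 hlceil hd1eq hd2eq
    -- arithmetic setup
    set d : ℕ := m - n with hdN
    have hdpos : 0 < d := by omega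
    have hdZ : (d : ℤ) = (m : ℤ) - (n : ℤ) := by omega
    have hm1 : m + 1 = l * d + d1 := by
      have h : ((l * d + d1 : ℕ) : ℤ) = ((m + 1 : ℕ) : ℤ) := by
        push_cast
        rw [hdZ]
        linarith [hd1eq]
      exact_mod_cast h.symm
    have hld : l * d = n + 1 + d2 := by
      have h : ((l * d : ℕ) : ℤ) = ((n + 1 + d2 : ℕ) : ℤ) := by
        push_cast
        rw [hdZ]
        linarith [hd2eq]
      exact_mod_cast h
    have hl1 : 1 ≤ l := by
      rcases Nat.eq_zero_or_pos l with h | h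
      · rw [h] at hld; simp at hld; omega
      · exact h
    have hdd : d1 + d2 = d := by
      have h1 := hm1
      have h2 := hld
      generalize l * d = Q at h1 h2
      omega
    -- ceiling upper bound : l * d < n + 1 + d
    have hqpos : (0:ℚ) < (m : ℚ) - (n : ℚ) := by
      have : (n : ℚ) < (m : ℚ) := by exact_mod_cast hnm
      linarith
    have hceil2 : ((l : ℤ) : ℚ) < ((n : ℚ) + 1) / ((m : ℚ) - (n : ℚ)) + 1 := by
      rw [hlceil]
      exact_mod_cast Int.ceil_lt_add_one (((n : ℚ) + 1) / ((m : ℚ) - (n : ℚ)))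
    have hdQ : (d : ℚ) = (m : ℚ) - (n : ℚ) := by
      rw [hdN]
      push_cast [Nat.cast_sub hnm.le]
      ring
    have h5 : (l : ℚ) * ((m : ℚ) - (n : ℚ)) < ((n : ℚ) + 1) + ((m : ℚ) - (n : ℚ)) := by
      have := mul_lt_mul_of_pos_right hceil2 hqpos
      rwa [add_mul, div_mul_cancel₀ _ (ne_of_gt hqpos), one_mul, Int.cast_natCast] at this
    have hldlt : l * d < n + 1 + d := by
      have h : ((l * d : ℕ) : ℚ) < ((n + 1 + d : ℕ) : ℚ) := by
        push_cast
        rw [hdQ]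
        linarith
      exact_mod_cast h
    have hd2lt : d2 < d := by omega
    have hd1pos : 1 ≤ d1 := by omega
    have hc : ArithCtx N m n d l d1 d2 :=
      ⟨hmN, by omega, hdpos, hl1, hm1, hld, hd1pos, hdd⟩
    have hmb := main_bound hp0' hp1' hc
    -- positivity facts
    have hX : 0 < Aseq p (2 * l + 2) := Aseq_pos hp0' hp1 _
    have hY : 0 < Aseq p (2 * l) := Aseq_pos hp0' hp1 _
    have hu1 : 0 ≤ (1 - p) * Aseq p l := mul_nonneg (by linarith) (Aseq_nonneg hp0' hp1' _)
    have hu2 : 0 ≤ (1 - p) * Aseq p (l - 1) := mul_nonneg (by linarith) (Aseq_nonneg hp0' hp1' _)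
    have hg1 : ((1 - p) * Aseq p l) * ((1 - p) * Aseq p l) ≤ Aseq p (2 * l + 2) := glue hp0' hp1' l
    have hg2 : ((1 - p) * Aseq p (l - 1)) * ((1 - p) * Aseq p (l - 1)) ≤ Aseq p (2 * l) := by
      have := glue hp0' hp1' (l - 1)
      have h2l : 2 * (l - 1) + 2 = 2 * l := by omega
      rwa [h2l] at this
    have hc1 := rpow_combine hX hu1 hg1 d1
    have hc2 := rpow_combine hY hu2 hg2 d2
    have hkey : (prodBern p N {ω | ¬ inSumset ω m ∧ ¬ inSumset ω n}).toReal ≤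
        Aseq p (2 * l + 2) ^ ((d1 : ℝ) / 2) * Aseq p (2 * l) ^ ((d2 : ℝ) / 2) := by
      refine hmb.trans ?_
      have hnn1 : (0:ℝ) ≤ Aseq p (2 * l + 2) ^ (d1 / 2) * ((1 - p) * Aseq p l) ^ (d1 % 2) :=
        mul_nonneg (pow_nonneg hX.le _) (pow_nonneg hu1 _)
      have hnn2 : (0:ℝ) ≤ Aseq p (2 * l) ^ (d2 / 2) * ((1 - p) * Aseq p (l - 1)) ^ (d2 % 2) :=
        mul_nonneg (pow_nonneg hY.le _) (pow_nonneg hu2 _)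
      exact mul_le_mul hc1 hc2 hnn2 (Real.rpow_nonneg hX.le _)
    constructor
    · rw [aseq_eq hp0' hp1', aseq_eq hp0' hp1']
      exact hkey
    · refine hkey.trans ?_
      have hlam : 0 < lam p := lam_pos hp0 hp1
      have hA1 : Aseq p (2 * l + 2) ≤ lam p ^ (2 * l + 1) := by
        have := Aseq_le_lam_pow hp0 hp1 (2 * l + 1)
        rwa [show 2 * l + 1 + 1 = 2 * l + 2 from rfl] at this
      have hA2 : Aseq p (2 * l) ≤ lam p ^ (2 * l - 1) := by
        have := Aseq_le_lam_pow hp0 hp1 (2 * l - 1)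
        rwa [show 2 * l - 1 + 1 = 2 * l by omega] at this
      have hstep1 : Aseq p (2 * l + 2) ^ ((d1 : ℝ) / 2) ≤ (lam p ^ (2 * l + 1)) ^ ((d1 : ℝ) / 2) :=
        Real.rpow_le_rpow hX.le hA1 (by positivity)
      have hstep2 : Aseq p (2 * l) ^ ((d2 : ℝ) / 2) ≤ (lam p ^ (2 * l - 1)) ^ ((d2 : ℝ) / 2) :=
        Real.rpow_le_rpow hY.le hA2 (by positivity)
      have hmul : Aseq p (2 * l + 2) ^ ((d1 : ℝ) / 2) * Aseq p (2 * l) ^ ((d2 : ℝ) / 2) ≤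
          (lam p ^ (2 * l + 1)) ^ ((d1 : ℝ) / 2) * (lam p ^ (2 * l - 1)) ^ ((d2 : ℝ) / 2) :=
        mul_le_mul hstep1 hstep2 (Real.rpow_nonneg hY.le _)
          (Real.rpow_nonneg (pow_nonneg hlam.le _) _)
      refine hmul.trans ?_
      apply le_of_eq
      rw [← Real.rpow_natCast (lam p) (2 * l + 1), ← Real.rpow_natCast (lam p) (2 * l - 1),
        ← Real.rpow_mul hlam.le, ← Real.rpow_mul hlam.le, ← Real.rpow_add hlam]
      show lam p ^ _ = lam p ^ _
      congr 1
      have hm1R : (m : ℝ) + 1 = (l : ℝ) * (d : ℝ) + (d1 : ℝ) := by exact_mod_cast hm1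
      have hldR : (l : ℝ) * (d : ℝ) = (n : ℝ) + 1 + (d2 : ℝ) := by exact_mod_cast hld
      have hddR : (d1 : ℝ) + (d2 : ℝ) = (d : ℝ) := by exact_mod_cast hdd
      have hcast1 : ((2 * l + 1 : ℕ) : ℝ) = 2 * (l : ℝ) + 1 := by push_cast; ring
      have hcast2 : ((2 * l - 1 : ℕ) : ℝ) = 2 * (l : ℝ) - 1 := by
        have : (1:ℕ) ≤ 2 * l := by omega
        push_cast [Nat.cast_sub this]
        ring
      rw [hcast1, hcast2]
      linear_combination ((d1 : ℝ) / 2) * 0 + (1 : ℝ) * hm1R * 0 +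
        (-(1/2 : ℝ)) * hm1R + (1/2 : ℝ) * hldR + (l : ℝ) * hddR
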